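/- Let E be the n-dimensional evolution algebra with e_i·e_i = e_{i+1} for 1 ≤ i ≤ n-1 and e_n·e_n = 0. Then for all 0 ≤ k ≤ n-2 one has E^{2^k+1} = E^{2^k+2} = ⋯ = E^{2^{k+1}} = span{e_{k+2},...,e_n}; consequently E^{2^{n-1}} = span{e_n}, E^{2^{n-1}+1} = 0, and E is nilpotent of nilpotency index exactly 2^{n-1}+1. -/

import Mathlib

/-- Evolution algebra multiplication on `Fin n → ℂ` determined by a structure
matrix `A`: basis vectors satisfy `eᵢ · eⱼ = 0` for `i ≠ j` and
`eᵢ · eᵢ = ∑ k, A i k • e k`. -/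
noncomputable def eMul {n : ℕ} (A : Matrix (Fin n) (Fin n) ℂ) (x y : Fin n → ℂ) : Fin n → ℂ :=
  fun k => ∑ p, x p * y p * A p k

/-- Product of two subspaces: the span of all products. -/
noncomputable def sMul {n : ℕ} (A : Matrix (Fin n) (Fin n) ℂ) (S T : Submodule ℂ (Fin n → ℂ)) :
    Submodule ℂ (Fin n → ℂ) :=
  Submodule.span ℂ {z | ∃ x ∈ S, ∃ y ∈ T, z = eMul A x y}

/-- `dPow A k = E⁽ᵏ⁾`: `E⁽¹⁾ = E`, `E⁽ᵏ⁺¹⁾ = E⁽ᵏ⁾E⁽ᵏ⁾` (index 0 is a dummy). -/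
noncomputable def dPow {n : ℕ} (A : Matrix (Fin n) (Fin n) ℂ) : ℕ → Submodule ℂ (Fin n → ℂ)
  | 0 => ⊤
  | 1 => ⊤
  | (k+2) => sMul A (dPow A (k+1)) (dPow A (k+1))

/-- `rPow A k = E^{<k>}`: `E^{<1>} = E`, `E^{<k+1>} = E^{<k>}·E` (index 0 dummy). -/
noncomputable def rPow {n : ℕ} (A : Matrix (Fin n) (Fin n) ℂ) : ℕ → Submodule ℂ (Fin n → ℂ)
  | 0 => ⊤
  | 1 => ⊤
  | (k+2) => sMul A (rPow A (k+1)) ⊤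

/-- `pPow A k = Eᵏ`: `E¹ = E`, `Eᵏ = ∑_{i=1}^{k-1} Eⁱ·E^{k-i}` (index 0 dummy). -/
noncomputable def pPow {n : ℕ} (A : Matrix (Fin n) (Fin n) ℂ) : ℕ → Submodule ℂ (Fin n → ℂ)
  | 0 => ⊤
  | 1 => ⊤
  | (k+2) => ⨆ i : Fin (k+1), sMul A (pPow A (i.1+1)) (pPow A (k+1-i.1))
termination_by k => k
decreasing_by all_goals (have := i.isLt; omega)

section Aux
open Submodule

/-- vectors whose first `t` coordinates vanish -/
noncomputable def lowZero (n t : ℕ) : Submodule ℂ (Fin n → ℂ) where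
  carrier := {x | ∀ k : Fin n, (k : ℕ) < t → x k = 0}
  add_mem' := by intro a b ha hb k hk; simp [Pi.add_apply, ha k hk, hb k hk]
  zero_mem' := by intro k hk; rfl
  smul_mem' := by intro c x hx k hk; simp [hx k hk]

lemma mem_lowZero {n t : ℕ} {x : Fin n → ℂ} :
    x ∈ lowZero n t ↔ ∀ k : Fin n, (k : ℕ) < t → x k = 0 := Iff.rfl

lemma lowZero_anti {n t t' : ℕ} (h : t ≤ t') : lowZero n t' ≤ lowZero n t := by
  intro x hx k hk; exact hx k (lt_of_lt_of_le hk h)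

lemma spanS_eq (n t : ℕ) :
    Submodule.span ℂ {v | ∃ j : Fin n, t ≤ (j : ℕ) ∧ v = Pi.single j (1 : ℂ)} = lowZero n t := by
  apply le_antisymm
  · rw [Submodule.span_le]
    rintro v ⟨j, hj, rfl⟩ k hk
    have : k ≠ j := by intro h; subst h; omega
    simp [Pi.single_eq_of_ne this]
  · intro x hx
    have hxsum : x = ∑ j : Fin n, x j • (Pi.single j 1 : Fin n → ℂ) := by
      funext k
      simp [Finset.sum_apply, Pi.single_apply]
    rw [hxsum]
    apply Submodule.sum_mem
    intro j _
    by_cases hj : t ≤ (j : ℕ)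
    · exact Submodule.smul_mem _ _ (Submodule.subset_span ⟨j, hj, rfl⟩)
    · have : x j = 0 := hx j (by omega)
      simp [this]

variable {n : ℕ} {A : Matrix (Fin n) (Fin n) ℂ}
  (hA : ∀ i j : Fin n, A i j = if (j : ℕ) = (i : ℕ) + 1 then 1 else 0)

include hA

lemma eMul_coord_zero (x y : Fin n → ℂ) (k : Fin n) (hk : (k : ℕ) = 0) :
    eMul A x y k = 0 := by
  unfold eMul
  apply Finset.sum_eq_zero
  intro p _
  rw [hA p k, if_neg (by omega), mul_zero]

lemma eMul_coord (x y : Fin n → ℂ) (i k : Fin n) (hk : (k : ℕ) = (i : ℕ) + 1) :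
    eMul A x y k = x i * y i := by
  unfold eMul
  have : ∀ p : Fin n, x p * y p * A p k = if p = i then x i * y i else 0 := by
    intro p
    rw [hA p k]
    by_cases hp : p = i
    · subst hp; rw [if_pos hk, if_pos rfl, mul_one]
    · rw [if_neg (by simp [Fin.ext_iff] at hp ⊢; omega), if_neg hp, mul_zero]
  simp [this]

lemma sMul_lowZero (a b : ℕ) :
    sMul A (lowZero n a) (lowZero n b) = lowZero n (max a b + 1) := by
  apply le_antisymm
  · rw [sMul, Submodule.span_le]
    rintro z ⟨x, hx, y, hy, rfl⟩ k hk
    rcases Nat.eq_zero_or_pos (k : ℕ) with h0 | h0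
    · exact eMul_coord_zero hA x y k h0
    · have hkn : (k : ℕ) - 1 < n := by have := k.isLt; omega
      set i : Fin n := ⟨(k : ℕ) - 1, hkn⟩
      rw [eMul_coord hA x y i k (by simp [i]; omega)]
      have him : (i : ℕ) < max a b := by simp [i]; omega
      rcases lt_max_iff.mp him with h | h
      · rw [hx i h, zero_mul]
      · rw [hy i h, mul_zero]
  · rw [← spanS_eq n (max a b + 1), Submodule.span_le]
    rintro v ⟨j, hj, rfl⟩
    have hjn : (j : ℕ) - 1 < n := by have := j.isLt; omega
    set i : Fin n := ⟨(j : ℕ) - 1, hjn⟩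
    have hij : (j : ℕ) = (i : ℕ) + 1 := by simp [i]; omega
    have hkey : Pi.single j (1 : ℂ) = eMul A (Pi.single i 1) (Pi.single i 1) := by
      funext k
      rcases Nat.eq_zero_or_pos (k : ℕ) with h0 | h0
      · rw [eMul_coord_zero hA _ _ k h0, Pi.single_eq_of_ne (by intro h; subst h; omega) _]
      · have hkn : (k : ℕ) - 1 < n := by have := k.isLt; omega
        set l : Fin n := ⟨(k : ℕ) - 1, hkn⟩
        rw [eMul_coord hA _ _ l k (by simp [l]; omega)]
        by_cases hk : k = j
        · subst hk
          have : l = i := by simp [l, i]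
          rw [this]
          simp
        · have hli : l ≠ i := by
            simp [l, i, Fin.ext_iff] at hk ⊢
            omega
          rw [Pi.single_eq_of_ne hk, Pi.single_eq_of_ne hli, zero_mul]
    rw [hkey]
    apply Submodule.subset_span
    refine ⟨Pi.single i 1, ?_, Pi.single i 1, ?_, rfl⟩
    · intro k hk
      exact Pi.single_eq_of_ne (by simp [Fin.ext_iff]; omega) _
    · intro k hk
      exact Pi.single_eq_of_ne (by simp [Fin.ext_iff]; omega) _

omit hA in
lemma clog_add_le {a b : ℕ} (ha : 1 ≤ a) (hb : 1 ≤ b) :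
    Nat.clog 2 (a + b) ≤ max (Nat.clog 2 a) (Nat.clog 2 b) + 1 := by
  set c := max a b with hc
  have h1 : a + b ≤ 2 * c := by omega
  have h2 : Nat.clog 2 (a + b) ≤ Nat.clog 2 (2 * c) := Nat.clog_mono_right 2 h1
  have h3 : Nat.clog 2 (2 * c) = Nat.clog 2 c + 1 := by
    rw [Nat.clog_of_two_le one_lt_two (by omega)]
    congr 2
    omega
  have h4 : Nat.clog 2 c = max (Nat.clog 2 a) (Nat.clog 2 b) := by
    rcases le_total a b with h | h
    · rw [hc, max_eq_right h, max_eq_right (Nat.clog_mono_right 2 h)]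
    · rw [hc, max_eq_left h, max_eq_left (Nat.clog_mono_right 2 h)]
  omega

lemma pPow_eq (m : ℕ) (hm : 1 ≤ m) : pPow A m = lowZero n (Nat.clog 2 m) := by
  induction m using Nat.strong_induction_on with
  | _ m ih =>
    rcases m with _ | m
    · omega
    rcases m with _ | k
    · rw [Nat.clog_one_right, pPow]
      apply le_antisymm _ le_top
      intro x _ k hk
      omega
    · rw [pPow]
      have hstep : ∀ i : Fin (k+1),
          sMul A (pPow A (i.1+1)) (pPow A (k+1-i.1)) =
          lowZero n (max (Nat.clog 2 (i.1+1)) (Nat.clog 2 (k+1-i.1)) + 1) := by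
        intro i
        have hi := i.isLt
        rw [ih (i.1+1) (by omega) (by omega), ih (k+1-i.1) (by omega) (by omega),
          sMul_lowZero hA]
      apply le_antisymm
      · apply iSup_le
        intro i
        rw [hstep i]
        apply lowZero_anti
        have hi := i.isLt
        have := clog_add_le (a := i.1+1) (b := k+1-i.1) (by omega) (by omega)
        have heq : i.1 + 1 + (k+1-i.1) = k + 2 := by omega
        rw [heq] at this
        convert this using 2
      · set a := (k+3)/2
        have ha1 : 1 ≤ a := by omega
        have hak : a - 1 < k + 1 := by omega
        set i : Fin (k+1) := ⟨a - 1, hak⟩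
        refine le_trans ?_ (le_iSup _ i)
        rw [hstep i]
        apply lowZero_anti
        have hi1 : i.1 + 1 = a := by simp [i]; omega
        have hi2 : k + 1 - i.1 = k + 2 - a := by simp [i]; omega
        rw [hi1, hi2]
        have hrec : Nat.clog 2 (k+2) = Nat.clog 2 ((k+3)/2) + 1 :=
          Nat.clog_of_two_le one_lt_two (by omega)
        have hle : Nat.clog 2 (k+2-a) ≤ Nat.clog 2 a :=
          Nat.clog_mono_right 2 (by omega)
        rw [max_eq_left hle, hrec]

end Aux

/-- for the evolution algebra with `eᵢ·eᵢ = e_{i+1}` (`i < n`) and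
`eₙ·eₙ = 0`, one has `E^{2ᵏ+1} = ⋯ = E^{2ᵏ⁺¹} = span{e_{k+2},…,e_n}` for
`0 ≤ k ≤ n-2`; consequently `E^{2ⁿ⁻¹} = span{e_n}`, `E^{2ⁿ⁻¹+1} = 0`, and the
nilpotency index is exactly `2ⁿ⁻¹ + 1`. -/
theorem jordan_cell_nilpotency_index {n : ℕ} (hn : 1 ≤ n)
    (A : Matrix (Fin n) (Fin n) ℂ)
    (hA : ∀ i j : Fin n, A i j = if (j : ℕ) = (i : ℕ) + 1 then 1 else 0) :
    (∀ k : ℕ, k ≤ n - 2 → ∀ m : ℕ, 2 ^ k + 1 ≤ m → m ≤ 2 ^ (k + 1) →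
      pPow A m =
        Submodule.span ℂ {v | ∃ j : Fin n, k + 1 ≤ (j : ℕ) ∧ v = Pi.single j (1 : ℂ)}) ∧
    pPow A (2 ^ (n - 1)) = Submodule.span ℂ {Pi.single (⟨n - 1, by omega⟩ : Fin n) (1 : ℂ)} ∧
    pPow A (2 ^ (n - 1) + 1) = ⊥ ∧
    (∀ m : ℕ, 1 ≤ m → m < 2 ^ (n - 1) + 1 → pPow A m ≠ ⊥) := by
  have key : ∀ m : ℕ, 1 ≤ m → pPow A m = lowZero n (Nat.clog 2 m) :=
    fun m hm => pPow_eq hA m hm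
  have hbot : lowZero n n = ⊥ := by
    rw [eq_bot_iff]
    intro x hx
    have hx0 : x = 0 := funext fun k => hx k k.isLt
    simp [hx0]
  refine ⟨?_, ?_, ?_, ?_⟩
  · intro k hk m hm1 hm2
    have hpk : 1 ≤ 2 ^ k := Nat.one_le_two_pow
    have hc : Nat.clog 2 m = k + 1 := by
      have h1 : Nat.clog 2 m ≤ k + 1 := (Nat.clog_le_iff_le_pow one_lt_two).mpr hm2
      have h2 : k < Nat.clog 2 m := (Nat.lt_clog_iff_pow_lt one_lt_two).mpr (by omega)
      omega
    rw [key m (by omega), hc]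
    exact (spanS_eq n (k + 1)).symm
  · have hpk : 1 ≤ 2 ^ (n - 1) := Nat.one_le_two_pow
    rw [key _ hpk, Nat.clog_pow 2 (n - 1) one_lt_two, ← spanS_eq]
    congr 1
    ext v
    constructor
    · rintro ⟨j, hj, rfl⟩
      have : j = ⟨n - 1, by omega⟩ := Fin.ext (by have := j.isLt; simp; omega)
      rw [this]
      rfl
    · rintro rfl
      exact ⟨⟨n - 1, by omega⟩, by simp, rfl⟩
  · have hpk : 1 ≤ 2 ^ (n - 1) := Nat.one_le_two_pow
    have hle : 2 ^ (n - 1) + 1 ≤ 2 ^ n := by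
      have h2n : 2 ^ n = 2 * 2 ^ (n - 1) := by
        nth_rewrite 1 [show n = (n - 1) + 1 by omega]
        rw [pow_succ]; ring
      have := Nat.one_le_two_pow (n := n - 1)
      omega
    have hc : Nat.clog 2 (2 ^ (n - 1) + 1) = n := by
      have h1 : Nat.clog 2 (2 ^ (n - 1) + 1) ≤ n := (Nat.clog_le_iff_le_pow one_lt_two).mpr hle
      have h2 : n - 1 < Nat.clog 2 (2 ^ (n - 1) + 1) :=
        (Nat.lt_clog_iff_pow_lt one_lt_two).mpr (by omega)
      omega
    rw [key _ (by omega), hc, hbot]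
  · intro m hm1 hm2 hb
    rw [key m hm1] at hb
    have hcl : Nat.clog 2 m ≤ n - 1 := (Nat.clog_le_iff_le_pow one_lt_two).mpr (by omega)
    have hmem : ((Pi.single (⟨n - 1, by omega⟩ : Fin n) 1 : Fin n → ℂ)) ∈ lowZero n (Nat.clog 2 m) := by
      intro k hk
      exact Pi.single_eq_of_ne (by simp [Fin.ext_iff]; omega) _
    rw [hb, Submodule.mem_bot] at hmem
    have h0 : (Pi.single (⟨n - 1, by omega⟩ : Fin n) 1 : Fin n → ℂ) ⟨n - 1, by omega⟩ = 0 := by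
      rw [hmem]; rfl
    rw [Pi.single_eq_same] at h0
    exact one_ne_zero h0
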